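/- Let p be an odd prime and let γ ∈ SL₂(𝔽_p) be such that (tr γ)² − 4 is a nonzero non-square in 𝔽_p (so the characteristic polynomial of γ is irreducible over 𝔽_p). Let l be the order of the image of γ in PSL₂(𝔽_p) = SL₂(𝔽_p)/{±I}, so that l divides (p+1)/2 and l > 1. Then the action of γ on the projective line ℙ¹(𝔽_p) has no fixed points and every orbit has cardinality exactly l; in particular the cycle type of γ on ℙ¹(𝔽_p) is (l^{(p+1)/l}). -/
import Mathlib

open Matrix

namespace Stmt16Aux

variable {p : ℕ} [Fact p.Prime] (M : Matrix (Fin 2) (Fin 2) (ZMod p))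

lemma sq_eq (hdet : M.det = 1) : M * M = M.trace • M - 1 := by
  have h := Matrix.det_fin_two M
  rw [hdet] at h
  ext i j
  fin_cases i <;> fin_cases j <;>
    simp [Matrix.mul_apply, Fin.sum_univ_two, Matrix.trace_fin_two, Matrix.one_apply] <;>
    first
    | linear_combination h
    | ring

lemma det_sub_scalar (hdet : M.det = 1) (c : ZMod p) :
    (M - c • 1).det = c ^ 2 - M.trace * c + 1 := by
  have h := Matrix.det_fin_two M
  rw [hdet] at h
  simp [Matrix.det_fin_two, Matrix.trace_fin_two, Matrix.one_apply]
  linear_combination -h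

lemma no_eigenvalue (hdet : M.det = 1) (hns : ¬ IsSquare (M.trace ^ 2 - 4)) (c : ZMod p) :
    (M - c • 1).det ≠ 0 := by
  intro h0
  rw [det_sub_scalar M hdet] at h0
  exact hns ⟨2 * c - M.trace, by linear_combination (-4 : ZMod p) * h0⟩

lemma no_eigenvector (hdet : M.det = 1) (hns : ¬ IsSquare (M.trace ^ 2 - 4))
    (v : Fin 2 → ZMod p) (hv : v ≠ 0) (c : ZMod p) (h : M.mulVec v = c • v) : False := by
  apply no_eigenvalue M hdet hns c
  rw [← Matrix.exists_mulVec_eq_zero_iff]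
  refine ⟨v, hv, ?_⟩
  rw [Matrix.sub_mulVec, h, Matrix.smul_mulVec, Matrix.one_mulVec, sub_self]

lemma lin_indep (hdet : M.det = 1) (hΔ : M.trace ^ 2 - 4 ≠ 0) (a b : ZMod p)
    (h : a • (1 : Matrix (Fin 2) (Fin 2) (ZMod p)) + b • M = 0) : a = 0 ∧ b = 0 := by
  by_cases hb : b = 0
  · subst hb
    refine ⟨?_, rfl⟩
    have := congrFun (congrFun h 0) 0
    simpa [Matrix.one_apply] using this
  · exfalso
    have hM : M = (-a * b⁻¹) • (1 : Matrix (Fin 2) (Fin 2) (ZMod p)) := by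
      have h2 : b • M = -(a • (1 : Matrix (Fin 2) (Fin 2) (ZMod p))) :=
        eq_neg_of_add_eq_zero_left (by rw [add_comm]; exact h)
      calc M = b⁻¹ • (b • M) := by rw [smul_smul, inv_mul_cancel₀ hb, one_smul]
      _ = (-a * b⁻¹) • (1 : Matrix (Fin 2) (Fin 2) (ZMod p)) := by
          rw [h2, smul_neg, smul_smul, ← neg_smul]; ring_nf
    set c := -a * b⁻¹ with hc
    have htr : M.trace = 2 * c := by
      rw [hM, Matrix.trace_smul, Matrix.trace_one]
      simp [Fintype.card_fin]
      ring
    have hd : c ^ 2 = 1 := by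
      have := hdet
      rw [hM, Matrix.det_smul, Matrix.det_one, Fintype.card_fin] at this
      simpa using this
    apply hΔ
    rw [htr]
    linear_combination (4 : ZMod p) * hd

lemma pow_in_span (hdet : M.det = 1) (k : ℕ) :
    ∃ a b : ZMod p, M ^ k = a • (1 : Matrix (Fin 2) (Fin 2) (ZMod p)) + b • M := by
  induction k with
  | zero => exact ⟨1, 0, by simp⟩
  | succ k ih =>
    obtain ⟨a, b, ih⟩ := ih
    refine ⟨-b, a + b * M.trace, ?_⟩
    rw [pow_succ, ih, add_mul, smul_mul_assoc, smul_mul_assoc, one_mul, sq_eq M hdet]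
    module

lemma sqrt_one (hdet : M.det = 1) (hΔ : M.trace ^ 2 - 4 ≠ 0)
    (hns : ¬ IsSquare (M.trace ^ 2 - 4)) (X : Matrix (Fin 2) (Fin 2) (ZMod p))
    (a b : ZMod p) (hX : X = a • (1 : Matrix (Fin 2) (Fin 2) (ZMod p)) + b • M)
    (h : X * X = 1) : X = 1 ∨ X = -1 := by
  set t := M.trace with ht
  have hexp : X * X = (a * b + a * b + b * b * t) • M
      + (a * a - b * b) • (1 : Matrix (Fin 2) (Fin 2) (ZMod p)) := by
    rw [hX]
    simp only [add_mul, mul_add, smul_mul_assoc, mul_smul_comm, one_mul, mul_one]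
    rw [sq_eq M hdet]
    module
  rw [hexp] at h
  have h0 : (a * a - b * b - 1) • (1 : Matrix (Fin 2) (Fin 2) (ZMod p))
      + (a * b + a * b + b * b * t) • M = 0 := by
    calc (a * a - b * b - 1) • (1 : Matrix (Fin 2) (Fin 2) (ZMod p))
        + (a * b + a * b + b * b * t) • M
        = ((a * b + a * b + b * b * t) • M
          + (a * a - b * b) • (1 : Matrix (Fin 2) (Fin 2) (ZMod p))) - 1 := by module
      _ = 0 := by rw [h, sub_self]
  obtain ⟨e1, e2⟩ := lin_indep M hdet hΔ _ _ h0
  by_cases hb : b = 0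
  · subst hb
    have ha : a * a = 1 := by linear_combination e1
    rcases mul_self_eq_one_iff.mp ha with h1 | h1 <;> subst h1
    · left; rw [hX]; simp
    · right; rw [hX]; simp
  · exfalso
    apply hns
    have e3 : 2 * a + b * t = 0 := by
      rcases mul_eq_zero.mp (show b * (2 * a + b * t) = 0 by linear_combination e2) with h' | h'
      · exact absurd h' hb
      · exact h'
    refine ⟨2 * b⁻¹, ?_⟩
    field_simp
    linear_combination (4 : ZMod p) * e1 + (b * t - 2 * a) * e3

lemma pow_p (hodd : Odd p) (hdet : M.det = 1) (hΔ : M.trace ^ 2 - 4 ≠ 0)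
    (hns : ¬ IsSquare (M.trace ^ 2 - 4)) :
    M ^ p = M.trace • (1 : Matrix (Fin 2) (Fin 2) (ZMod p)) - M := by
  have hsq := sq_eq M hdet
  set t := M.trace with ht
  set N : Matrix (Fin 2) (Fin 2) (ZMod p) := (2 : ZMod p) • M - t • 1 with hN
  have hN2 : N * N = (t ^ 2 - 4) • (1 : Matrix (Fin 2) (Fin 2) (ZMod p)) := by
    rw [hN]
    simp only [sub_mul, mul_sub, smul_mul_assoc, mul_smul_comm, one_mul, mul_one]
    rw [hsq]
    module
  have hptwo : 2 * (p / 2) + 1 = p := by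
    have := Nat.odd_iff.mp hodd
    omega
  have heuler : (t ^ 2 - 4) ^ (p / 2) = -1 := by
    rcases ZMod.pow_div_two_eq_neg_one_or_one p hΔ with h | h
    · exact absurd ((ZMod.euler_criterion p hΔ).mpr h) hns
    · exact h
  have hNp : N ^ p = -N := by
    calc N ^ p = (N * N) ^ (p / 2) * N := by
          rw [← pow_two, ← pow_mul, ← pow_succ, hptwo]
    _ = -N := by
          rw [hN2, smul_pow, one_pow, heuler, smul_mul_assoc, neg_smul, one_smul, one_mul]
  have hfrob : N ^ p = (2 : ZMod p) • M ^ p - t • 1 := by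
    have hcomm : Commute ((2 : ZMod p) • M) (-(t • (1 : Matrix (Fin 2) (Fin 2) (ZMod p)))) :=
      (((Commute.one_right ((2 : ZMod p) • M)).smul_right t).neg_right)
    calc N ^ p = ((2 : ZMod p) • M + -(t • 1)) ^ p := by rw [hN, sub_eq_add_neg]
    _ = ((2 : ZMod p) • M) ^ p + (-(t • (1 : Matrix (Fin 2) (Fin 2) (ZMod p)))) ^ p :=
          add_pow_char_of_commute p hcomm
    _ = (2 : ZMod p) • M ^ p - t • 1 := by
          rw [smul_pow, Odd.neg_pow hodd, smul_pow, one_pow, ZMod.pow_card, ZMod.pow_card]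
          module
  have h2 : (2 : ZMod p) • M ^ p
      = (2 : ZMod p) • (t • (1 : Matrix (Fin 2) (Fin 2) (ZMod p)) - M) := by
    have hthis := hfrob.symm.trans hNp
    rw [hN] at hthis
    calc (2 : ZMod p) • M ^ p
        = ((2 : ZMod p) • M ^ p - t • 1) + t • 1 := by module
      _ = -((2 : ZMod p) • M - t • 1) + t • 1 := by rw [hthis]
      _ = (2 : ZMod p) • (t • (1 : Matrix (Fin 2) (Fin 2) (ZMod p)) - M) := by module
  have h2ne : (2 : ZMod p) ≠ 0 := by
    have hp2 : p ≠ 2 := by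
      intro h; rw [h] at hodd; exact (by decide : ¬ Odd 2) hodd
    intro h
    have h' : ((2 : ℕ) : ZMod p) = 0 := by exact_mod_cast h
    exact hp2 ((Nat.prime_dvd_prime_iff_eq (Fact.out : p.Prime) Nat.prime_two).mp
      ((ZMod.natCast_eq_zero_iff 2 p).mp h'))
  exact smul_right_injective _ h2ne h2

lemma pow_p_add_one (hodd : Odd p) (hdet : M.det = 1) (hΔ : M.trace ^ 2 - 4 ≠ 0)
    (hns : ¬ IsSquare (M.trace ^ 2 - 4)) : M ^ (p + 1) = 1 := by
  rw [pow_succ, pow_p M hodd hdet hΔ hns, sub_mul, smul_mul_assoc, one_mul, sq_eq M hdet]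
  module

lemma pow_half (hodd : Odd p) (hdet : M.det = 1) (hΔ : M.trace ^ 2 - 4 ≠ 0)
    (hns : ¬ IsSquare (M.trace ^ 2 - 4)) :
    M ^ ((p + 1) / 2) = 1 ∨ M ^ ((p + 1) / 2) = -1 := by
  have hXX : M ^ ((p + 1) / 2) * M ^ ((p + 1) / 2) = 1 := by
    rw [← pow_add]
    have hh : (p + 1) / 2 + (p + 1) / 2 = p + 1 := by
      obtain ⟨k, hk⟩ := hodd; omega
    rw [hh, pow_p_add_one M hodd hdet hΔ hns]
  obtain ⟨a, b, hab⟩ := pow_in_span M hdet ((p + 1) / 2)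
  exact sqrt_one M hdet hΔ hns _ a b hab hXX

lemma pow_eigen (hdet : M.det = 1) (hΔ : M.trace ^ 2 - 4 ≠ 0)
    (hns : ¬ IsSquare (M.trace ^ 2 - 4)) (k : ℕ) (v : Fin 2 → ZMod p) (hv : v ≠ 0)
    (c : ZMod p) (h : (M ^ k).mulVec v = c • v) : M ^ k = 1 ∨ M ^ k = -1 := by
  obtain ⟨a, b, hab⟩ := pow_in_span M hdet k
  by_cases hb : b = 0
  · subst hb
    rw [zero_smul, add_zero] at hab
    have hd : a * a = 1 := by
      have h1 : (M ^ k).det = 1 := by rw [Matrix.det_pow, hdet, one_pow]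
      rw [hab, Matrix.det_smul, Matrix.det_one, Fintype.card_fin] at h1
      rw [← pow_two]
      simpa using h1
    rcases mul_self_eq_one_iff.mp hd with h1 | h1 <;> subst h1
    · left; rw [hab]; simp
    · right; rw [hab]; simp
  · exfalso
    have h1 : (a • (1 : Matrix (Fin 2) (Fin 2) (ZMod p)) + b • M).mulVec v = c • v := by
      rw [← hab]; exact h
    rw [Matrix.add_mulVec, Matrix.smul_mulVec, Matrix.smul_mulVec,
      Matrix.one_mulVec] at h1
    have h2 : b • M.mulVec v = c • v - a • v := by
      rw [← h1]; module
    have hmv : M.mulVec v = (b⁻¹ * (c - a)) • v := by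
      calc M.mulVec v = b⁻¹ • (b • M.mulVec v) := by
            rw [smul_smul, inv_mul_cancel₀ hb, one_smul]
        _ = (b⁻¹ * (c - a)) • v := by
            rw [h2, smul_sub, smul_smul, smul_smul, ← sub_smul, ← mul_sub]
    exact no_eigenvector M hdet hns v hv _ hmv

lemma mulVec_ne_zero (A : Matrix (Fin 2) (Fin 2) (ZMod p)) (hA : A.det ≠ 0)
    (v : Fin 2 → ZMod p) (hv : v ≠ 0) : A.mulVec v ≠ 0 := by
  intro h0
  exact hA ((Matrix.exists_mulVec_eq_zero_iff).mp ⟨v, hv, h0⟩)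

lemma mk_congr (v w : Fin 2 → ZMod p) (hv : v ≠ 0) (hw : w ≠ 0) (h : v = w) :
    Projectivization.mk (ZMod p) v hv = Projectivization.mk (ZMod p) w hw := by
  subst h; rfl

end Stmt16Aux

/-- Let `p` be an odd prime and `γ ∈ SL₂(𝔽_p)` such that `(tr γ)² - 4` is a nonzero non-square
in `𝔽_p`, and let `l` be the order of the image of `γ` in `PSL₂(𝔽_p)` (the quotient of
`SL₂(𝔽_p)` by its center `{±I}`).  Then `l ∣ (p+1)/2`, `l > 1`, the action of `γ` on the
projective line `ℙ¹(𝔽_p)` has no fixed points, and every orbit has cardinality exactly `l`;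
in particular the cycle type is `(l^{(p+1)/l})`. -/
theorem stmt16 (p : ℕ) [Fact p.Prime] (hodd : Odd p)
    (γ : Matrix.SpecialLinearGroup (Fin 2) (ZMod p))
    (htr : Matrix.trace γ.1 ^ 2 - 4 ≠ 0 ∧ ¬ IsSquare (Matrix.trace γ.1 ^ 2 - 4))
    (l : ℕ)
    (hl : l = orderOf (QuotientGroup.mk γ :
      Matrix.SpecialLinearGroup (Fin 2) (ZMod p) ⧸
        Subgroup.center (Matrix.SpecialLinearGroup (Fin 2) (ZMod p))))
    (σ : Equiv.Perm (Projectivization (ZMod p) (Fin 2 → ZMod p)))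
    (hσ : ∀ (v : Fin 2 → ZMod p) (hv : v ≠ 0) (hv' : γ.1.mulVec v ≠ 0),
      σ (Projectivization.mk (ZMod p) v hv) =
        Projectivization.mk (ZMod p) (γ.1.mulVec v) hv') :
    l ∣ (p + 1) / 2 ∧ 1 < l ∧
    (∀ x : Projectivization (ZMod p) (Fin 2 → ZMod p), σ x ≠ x) ∧
    (∀ x : Projectivization (ZMod p) (Fin 2 → ZMod p),
      Nat.card (MulAction.orbit (Subgroup.zpowers σ) x) = l) ∧
    Nat.card (MulAction.orbitRel.Quotient (Subgroup.zpowers σ)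
        (Projectivization (ZMod p) (Fin 2 → ZMod p))) = (p + 1) / l := by
  classical
  obtain ⟨hΔ, hns⟩ := htr
  have hdet : (γ.1).det = 1 := γ.2
  -- characterization of the center
  have hcenter : ∀ g : Matrix.SpecialLinearGroup (Fin 2) (ZMod p),
      g ∈ Subgroup.center (Matrix.SpecialLinearGroup (Fin 2) (ZMod p)) ↔
        (g.1 = 1 ∨ g.1 = -1) := by
    intro g
    have hneg : (Matrix.diagonal fun _ : Fin 2 => (-1 : ZMod p)) = -1 := by
      ext i j
      rcases eq_or_ne i j with rfl | hij
      · simp [Matrix.diagonal_apply, Matrix.one_apply, Matrix.neg_apply]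
      · simp [Matrix.diagonal_apply_ne _ hij, Matrix.one_apply_ne hij, Matrix.neg_apply]
    rw [Matrix.SpecialLinearGroup.mem_center_iff]
    constructor
    · rintro ⟨r, hr, hrg⟩
      rw [Fintype.card_fin] at hr
      have hr2 : r = 1 ∨ r = -1 := mul_self_eq_one_iff.mp (by rw [← pow_two]; exact hr)
      rcases hr2 with rfl | rfl
      · left; rw [← hrg]; simp [Matrix.scalar_apply]
      · right; rw [← hrg]; simp [Matrix.scalar_apply, hneg]
    · rintro (h | h)
      · exact ⟨1, by simp, by rw [h]; simp [Matrix.scalar_apply]⟩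
      · refine ⟨-1, by simp [Fintype.card_fin], ?_⟩
        rw [h]; simp [Matrix.scalar_apply, hneg]
  -- order divisibility criterion
  have horder : ∀ k : ℕ, (l ∣ k ↔ (γ.1 ^ k = 1 ∨ γ.1 ^ k = -1)) := by
    intro k
    rw [hl, orderOf_dvd_iff_pow_eq_one, ← QuotientGroup.mk_pow,
      QuotientGroup.eq_one_iff, hcenter (γ ^ k),
      Matrix.SpecialLinearGroup.coe_pow]
  -- part 1
  have part1 : l ∣ (p + 1) / 2 :=
    (horder _).mpr (Stmt16Aux.pow_half γ.1 hodd hdet hΔ hns)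
  -- part 2
  have hlpos : 0 < l := by
    rw [hl]; exact orderOf_pos _
  have hne1 : ¬ (γ.1 ^ 1 = 1 ∨ γ.1 ^ 1 = -1) := by
    rw [pow_one]
    rintro (h | h) <;> apply hΔ <;> rw [h]
    · rw [Matrix.trace_one]; simp [Fintype.card_fin]; ring
    · rw [Matrix.trace_neg, Matrix.trace_one]; simp [Fintype.card_fin]; ring
  have part2 : 1 < l := by
    by_contra hcon
    push_neg at hcon
    have hl1 : l = 1 := by omega
    exact hne1 ((horder 1).mp (by rw [hl1]))
  -- the power formula for σ
  have hMk : ∀ k : ℕ, (γ.1 ^ k).det ≠ 0 := by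
    intro k; rw [Matrix.det_pow, hdet, one_pow]; exact one_ne_zero
  have hpow : ∀ (k : ℕ) (v : Fin 2 → ZMod p) (hv : v ≠ 0),
      (σ ^ k) (Projectivization.mk (ZMod p) v hv) =
        Projectivization.mk (ZMod p) ((γ.1 ^ k).mulVec v)
          (Stmt16Aux.mulVec_ne_zero _ (hMk k) v hv) := by
    intro k
    induction k with
    | zero =>
      intro v hv
      simp only [pow_zero, Equiv.Perm.coe_one, id_eq]
      exact Stmt16Aux.mk_congr _ _ _ _ (Matrix.one_mulVec v).symm
    | succ k ih =>
      intro v hv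
      have hdet0 : (γ.1).det ≠ 0 := by rw [hdet]; exact one_ne_zero
      rw [pow_succ', Equiv.Perm.mul_apply, ih v hv,
        hσ _ (Stmt16Aux.mulVec_ne_zero _ (hMk k) v hv)
          (Stmt16Aux.mulVec_ne_zero _ hdet0 _
            (Stmt16Aux.mulVec_ne_zero _ (hMk k) v hv))]
      exact Stmt16Aux.mk_congr _ _ _ _ (by rw [Matrix.mulVec_mulVec, ← pow_succ'])
  -- fixed point criterion
  have hfix : ∀ (k : ℕ) (x : Projectivization (ZMod p) (Fin 2 → ZMod p)),
      (σ ^ k) x = x ↔ l ∣ k := by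
    intro k x
    induction x using Projectivization.ind with
    | h v hv =>
      rw [hpow k v hv]
      constructor
      · intro h
        obtain ⟨a, ha⟩ := (Projectivization.mk_eq_mk_iff _ _ _ _ _).mp h
        have heig : (γ.1 ^ k).mulVec v = (a : ZMod p) • v := by
          rw [← ha, Units.smul_def]
        exact (horder k).mpr (Stmt16Aux.pow_eigen γ.1 hdet hΔ hns k v hv _ heig)
      · intro hk
        rw [Projectivization.mk_eq_mk_iff]
        rcases (horder k).mp hk with h | h
        · exact ⟨1, by rw [h, Matrix.one_mulVec, one_smul]⟩
        · refine ⟨-1, ?_⟩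
          rw [h, Matrix.neg_mulVec, Matrix.one_mulVec]
          simp [Units.smul_def]
  -- part 3
  have part3 : ∀ x : Projectivization (ZMod p) (Fin 2 → ZMod p), σ x ≠ x := by
    intro x h
    have h1 : (σ ^ 1) x = x := by rwa [pow_one]
    have := Nat.le_of_dvd one_pos ((hfix 1 x).mp h1)
    omega
  -- part 4
  have part4 : ∀ x : Projectivization (ZMod p) (Fin 2 → ZMod p),
      Nat.card (MulAction.orbit (Subgroup.zpowers σ) x) = l := by
    intro x
    have hper : ∀ k : ℕ, Function.IsPeriodicPt (σ • ·) k x ↔ l ∣ k := by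
      intro k
      simp only [Function.IsPeriodicPt, Function.IsFixedPt, smul_iterate_apply,
        Equiv.Perm.smul_def]
      exact hfix k x
    have hmp : Function.minimalPeriod (σ • ·) x = l :=
      Nat.dvd_antisymm
        (Function.IsPeriodicPt.minimalPeriod_dvd ((hper l).mpr dvd_rfl))
        ((hper _).mp (Function.isPeriodicPt_minimalPeriod _ _))
    rw [Nat.card_congr (MulAction.orbitZPowersEquiv σ x), Nat.card_zmod, hmp]
  -- cardinality of the projective line
  let f : Option (ZMod p) → Projectivization (ZMod p) (Fin 2 → ZMod p) := fun o =>
    o.elim (Projectivization.mk (ZMod p) ![1, 0] (by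
      intro h; have := congrFun h 0; simp at this))
      (fun y => Projectivization.mk (ZMod p) ![y, 1] (by
        intro h; have := congrFun h 1; simp at this))
  have hf : Function.Bijective f := by
    constructor
    · rintro (_ | y1) (_ | y2) h <;> simp only [f, Option.elim] at h
      · rfl
      · exfalso
        obtain ⟨a, ha⟩ := (Projectivization.mk_eq_mk_iff _ _ _ _ _).mp h
        have h2 := congrFun ha 1
        simp [Units.smul_def] at h2
      · exfalso
        obtain ⟨a, ha⟩ := (Projectivization.mk_eq_mk_iff _ _ _ _ _).mp h
        have h2 := congrFun ha 1
        simp [Units.smul_def] at h2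
      · obtain ⟨a, ha⟩ := (Projectivization.mk_eq_mk_iff _ _ _ _ _).mp h
        have h1 := congrFun ha 1
        have h0 := congrFun ha 0
        simp [Units.smul_def] at h1 h0
        rw [h1] at h0
        simp at h0
        rw [h0]
    · intro x
      induction x using Projectivization.ind with
      | h v hv =>
        by_cases h1 : v 1 = 0
        · have h0 : v 0 ≠ 0 := by
            intro h0; apply hv; funext i; fin_cases i <;> simp [h0, h1]
          refine ⟨none, Eq.symm ?_⟩
          simp only [f, Option.elim]
          rw [Projectivization.mk_eq_mk_iff]
          refine ⟨Units.mk0 (v 0) h0, ?_⟩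
          funext i
          fin_cases i
          · show (Units.mk0 (v 0) h0 • ![1, 0]) 0 = v 0
            simp [Units.smul_def]
          · show (Units.mk0 (v 0) h0 • ![1, 0]) 1 = v 1
            simp [Units.smul_def, h1]
        · refine ⟨some (v 0 / v 1), Eq.symm ?_⟩
          simp only [f, Option.elim]
          rw [Projectivization.mk_eq_mk_iff]
          refine ⟨Units.mk0 (v 1) h1, ?_⟩
          funext i
          fin_cases i
          · show (Units.mk0 (v 1) h1 • ![v 0 / v 1, 1]) 0 = v 0
            simp only [Units.smul_def, Pi.smul_apply, Units.val_mk0, smul_eq_mul,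
              Matrix.cons_val_zero]
            rw [mul_comm, div_mul_cancel₀ _ h1]
          · show (Units.mk0 (v 1) h1 • ![v 0 / v 1, 1]) 1 = v 1
            simp [Units.smul_def]
  have finP : Finite (Projectivization (ZMod p) (Fin 2 → ZMod p)) :=
    Finite.of_surjective f hf.2
  have hcard : Nat.card (Projectivization (ZMod p) (Fin 2 → ZMod p)) = p + 1 := by
    rw [← Nat.card_eq_of_bijective f hf, Nat.card_eq_fintype_card, Fintype.card_option,
      ZMod.card]
  letI : Fintype (MulAction.orbitRel.Quotient (Subgroup.zpowers σ)
      (Projectivization (ZMod p) (Fin 2 → ZMod p))) := Fintype.ofFinite _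
  letI : ∀ ω : MulAction.orbitRel.Quotient (Subgroup.zpowers σ)
      (Projectivization (ZMod p) (Fin 2 → ZMod p)),
      Fintype (MulAction.orbit (Subgroup.zpowers σ) ω.out) := fun ω => Fintype.ofFinite _
  have key : p + 1 = Nat.card (MulAction.orbitRel.Quotient (Subgroup.zpowers σ)
      (Projectivization (ZMod p) (Fin 2 → ZMod p))) * l := by
    calc p + 1 = Nat.card (Projectivization (ZMod p) (Fin 2 → ZMod p)) := hcard.symm
      _ = Nat.card (Σ ω : MulAction.orbitRel.Quotient (Subgroup.zpowers σ)
            (Projectivization (ZMod p) (Fin 2 → ZMod p)),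
            MulAction.orbit (Subgroup.zpowers σ) ω.out) :=
          Nat.card_congr (MulAction.selfEquivSigmaOrbits _ _)
      _ = ∑ ω : MulAction.orbitRel.Quotient (Subgroup.zpowers σ)
            (Projectivization (ZMod p) (Fin 2 → ZMod p)),
            Nat.card (MulAction.orbit (Subgroup.zpowers σ) ω.out) := by
          rw [Nat.card_eq_fintype_card, Fintype.card_sigma]
          exact Finset.sum_congr rfl fun ω _ => (Nat.card_eq_fintype_card).symm
      _ = ∑ _ω : MulAction.orbitRel.Quotient (Subgroup.zpowers σ)
            (Projectivization (ZMod p) (Fin 2 → ZMod p)), l :=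
          Finset.sum_congr rfl fun ω _ => part4 _
      _ = Nat.card (MulAction.orbitRel.Quotient (Subgroup.zpowers σ)
            (Projectivization (ZMod p) (Fin 2 → ZMod p))) * l := by
          rw [Finset.sum_const, Nat.card_eq_fintype_card, smul_eq_mul, Finset.card_univ]
  refine ⟨part1, part2, part3, part4, ?_⟩
  rw [key, Nat.mul_div_cancel _ hlpos]
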